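/- Consider a deterministic MDP with dynamics f, stage cost L, discount γ ∈ (0,1], optimal value V*, optimal action-value Q*(s,a) = L(s,a) + γ V*(f(s,a)), and modified stage cost L̃(s,a) := L(s,a) + (γ−1) V*(f(s,a)). Suppose that along the optimal trajectory from s₀, V*(s_k) → v_∞ as k → ∞ for some finite constant v_∞. Then the undiscounted infinite-horizon value of π* with stage cost L̃ satisfies Ṽ(s₀) := Σ_{k=0}^{∞} L̃(s_k, π*(s_k)) = V*(s₀) − v_∞, and Q̃(s,a) := L̃(s,a) + Ṽ(f(s,a)) = Q*(s,a) − v_∞ for all s on the trajectory with a arbitrary (assuming the trajectory from f(s,a) under π* also converges with the same limit). -/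

import Mathlib

open Filter

/-- Deterministic MDP with modified stage cost
`L̃(s,a) = L(s,a) + (γ−1)V*(f(s,a))`, `Q*(s,a) = L(s,a) + γ V*(f(s,a))`.
If along the optimal closed-loop trajectory from any considered state the value
`V*(s_k)` converges to a finite constant `v_∞`, then the undiscounted
infinite-horizon value of `π*` with stage cost `L̃` is
`Ṽ(s) = V*(s) − v_∞` (as the limit of the partial sums), and
`Q̃(s,a) = L̃(s,a) + Ṽ(f(s,a)) = Q*(s,a) − v_∞`. -/
theorem stmt_2 {S A : Type*} (f : S → A → S) (L : S → A → ℝ) (γ : ℝ)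
    (hγ0 : 0 < γ) (hγ1 : γ ≤ 1)
    (V : S → ℝ) (π : S → A) (vinf : ℝ)
    (Q : S → A → ℝ) (hQ : ∀ s a, Q s a = L s a + γ * V (f s a))
    (hBellmanPol : ∀ s : S, V s = Q s (π s))
    (hBellmanMin : ∀ s : S, ∀ a : A, V s ≤ Q s a)
    (Ltil : S → A → ℝ)
    (hLtil : ∀ s a, Ltil s a = L s a + (γ - 1) * V (f s a))
    (traj : S → ℕ → S)
    (htraj0 : ∀ s, traj s 0 = s)
    (htraj : ∀ s k, traj s (k + 1) = f (traj s k) (π (traj s k)))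
    (hconv : ∀ s : S, Tendsto (fun k => V (traj s k)) atTop (nhds vinf)) :
    (∀ s : S,
      Tendsto (fun N => ∑ k ∈ Finset.range N, Ltil (traj s k) (π (traj s k)))
        atTop (nhds (V s - vinf))) ∧
    (∀ s : S, ∀ a : A, Ltil s a + (V (f s a) - vinf) = Q s a - vinf) := by
  constructor
  · intro s
    have key : ∀ k, Ltil (traj s k) (π (traj s k)) =
        V (traj s k) - V (traj s (k + 1)) := by
      intro k
      rw [hLtil, htraj, hBellmanPol (traj s k), hQ]
      ring
    have hsum : ∀ N, ∑ k ∈ Finset.range N, Ltil (traj s k) (π (traj s k)) =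
        V s - V (traj s N) := by
      intro N
      calc ∑ k ∈ Finset.range N, Ltil (traj s k) (π (traj s k))
          = ∑ k ∈ Finset.range N, (V (traj s k) - V (traj s (k + 1))) := by
            exact Finset.sum_congr rfl fun k _ => key k
        _ = V (traj s 0) - V (traj s N) := Finset.sum_range_sub' (fun k => V (traj s k)) N
        _ = V s - V (traj s N) := by rw [htraj0]
    simp only [hsum]
    exact (tendsto_const_nhds.sub (hconv s))
  · intro s a
    rw [hLtil, hQ]
    ring
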